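/- Let N ≥ 2 and λ > 0. Assume w : ℝ^N → ℝ is continuously differentiable, and there exist σ > 0 and ρ₀ > 0 such that both w(z) and ‖∇w(z)‖ are bounded by σ |z|^{−(N−1)/2} e^{−√λ|z|} for all |z| ≥ ρ₀. Assume ξ : ℝ^N → [0,1] is a C¹ function with ξ ≡ 0 on the ball B_ρ(0) and ξ ≡ 1 on ℝ^N \ B_{2ρ}(0), for some ρ > 0; for θ ∈ ℝ^N and R > 0 set Φ^{Rθ}(x) := ξ(x) w(x − Rθ). Then for every θ ∈ ℝ^N with |θ| ≥ 1: lim_{R→∞} R^{(N−1)/2} e^{2R√λ} ∫_{ℝ^N} ( ‖∇Φ^{Rθ}(x) − ∇w(x − Rθ)‖² + λ (Φ^{Rθ}(x) − w(x − Rθ))² ) dx = 0. -/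

import Mathlib

set_option maxHeartbeats 1000000


open MeasureTheory Filter Metric

theorem stmt4 (N : ℕ) (hN : 2 ≤ N) (lam : ℝ) (hlam : 0 < lam)
    (w : EuclideanSpace ℝ (Fin N) → ℝ) (hw : ContDiff ℝ 1 w)
    (σ ρ₀ : ℝ) (hσ : 0 < σ) (hρ₀ : 0 < ρ₀)
    (hwdecay : ∀ z : EuclideanSpace ℝ (Fin N), ρ₀ ≤ ‖z‖ →
      |w z| ≤ σ * ‖z‖ ^ (-(((N : ℝ) - 1) / 2)) * Real.exp (-(Real.sqrt lam * ‖z‖)) ∧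
      ‖gradient w z‖ ≤ σ * ‖z‖ ^ (-(((N : ℝ) - 1) / 2)) * Real.exp (-(Real.sqrt lam * ‖z‖)))
    (ρ : ℝ) (hρ : 0 < ρ)
    (ξ : EuclideanSpace ℝ (Fin N) → ℝ) (hξ : ContDiff ℝ 1 ξ)
    (hξ01 : ∀ x, ξ x ∈ Set.Icc (0:ℝ) 1)
    (hξ0 : ∀ x ∈ Metric.ball (0 : EuclideanSpace ℝ (Fin N)) ρ, ξ x = 0)
    (hξ1 : ∀ x ∉ Metric.ball (0 : EuclideanSpace ℝ (Fin N)) (2 * ρ), ξ x = 1)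
    (θ : EuclideanSpace ℝ (Fin N)) (hθ : 1 ≤ ‖θ‖) :
    Tendsto (fun R : ℝ =>
        R ^ (((N : ℝ) - 1) / 2) * Real.exp (2 * R * Real.sqrt lam) *
          ∫ x, (‖gradient (fun x' => ξ x' * w (x' - R • θ)) x - gradient w (x - R • θ)‖ ^ 2 +
            lam * (ξ x * w (x - R • θ) - w (x - R • θ)) ^ 2)) atTop (nhds 0) := by
  have hs : 0 < Real.sqrt lam := Real.sqrt_pos.mpr hlam
  set s : ℝ := Real.sqrt lam with hs_def
  set e : ℝ := ((N : ℝ) - 1) / 2 with he_def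
  have h2N : (2 : ℝ) ≤ (N : ℝ) := by exact_mod_cast hN
  have he : 0 < e := by rw [he_def]; linarith
  -- bound on the derivative of ξ on the closed ball
  obtain ⟨M, hM⟩ := (isCompact_closedBall (0 : EuclideanSpace ℝ (Fin N)) (2*ρ)).exists_bound_of_continuousOn
    ((hξ.continuous_fderiv one_ne_zero).continuousOn)
  have hM0 : 0 ≤ M := le_trans (norm_nonneg _) (hM 0 (by simp [mem_closedBall]; positivity))
  set V : ℝ := (volume (closedBall (0 : EuclideanSpace ℝ (Fin N)) (2*ρ))).toReal with hV_def
  have hV0 : 0 ≤ V := ENNReal.toReal_nonneg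
  set C0 : ℝ := ((M+1)^2 + lam) * σ^2 with hC0_def
  have hC00 : 0 ≤ C0 := by positivity
  set C1 : ℝ := C0 * V * Real.exp (4*ρ*s) * 4 ^ e with hC1_def
  apply squeeze_zero' (g := fun R : ℝ => C1 * R ^ (-e))
  · filter_upwards [eventually_ge_atTop (0:ℝ)] with R hR
    have h1 : (0:ℝ) ≤ R ^ e * Real.exp (2*R*s) := by positivity
    refine mul_nonneg h1 (integral_nonneg fun x => ?_)
    positivity
  · filter_upwards [eventually_ge_atTop (ρ₀ + 2*ρ), eventually_ge_atTop (4*ρ),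
      eventually_ge_atTop (1:ℝ)] with R hR1 hR2 hR3
    have hRpos : (0:ℝ) < R := lt_of_lt_of_le one_pos hR3
    have hab : 0 < R - 2*ρ := by linarith
    have hρ₀R : ρ₀ ≤ R - 2*ρ := by linarith
    have hhalf : R/2 ≤ R - 2*ρ := by linarith
    set m : ℝ := σ * (R - 2*ρ) ^ (-e) * Real.exp (-(s * (R - 2*ρ))) with hm_def
    have hm0 : 0 ≤ m := by positivity
    -- derivative of the translated w
    have hwRd : ∀ x : EuclideanSpace ℝ (Fin N),
        HasFDerivAt (fun x' => w (x' - R • θ)) (fderiv ℝ w (x - R • θ)) x := by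
      intro x
      have h1 : HasFDerivAt (fun x' : EuclideanSpace ℝ (Fin N) => x' - R • θ)
          (ContinuousLinearMap.id ℝ (EuclideanSpace ℝ (Fin N))) x := (hasFDerivAt_id x).sub_const _
      have h2 := (hw.differentiable one_ne_zero (x - R • θ)).hasFDerivAt
      have h3 := h2.comp x h1
      simp only [ContinuousLinearMap.comp_id] at h3
      exact h3
    -- gradient difference formula
    have hgd : ∀ x : EuclideanSpace ℝ (Fin N),
        gradient (fun x' => ξ x' * w (x' - R • θ)) x - gradient w (x - R • θ)
        = (InnerProductSpace.toDual ℝ (EuclideanSpace ℝ (Fin N))).symm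
            ((ξ x - 1) • fderiv ℝ w (x - R • θ) + w (x - R • θ) • fderiv ℝ ξ x) := by
      intro x
      rw [gradient, gradient, ← map_sub]
      congr 1
      rw [fderiv_fun_mul ((hξ.differentiable one_ne_zero) x) (hwRd x).differentiableAt, (hwRd x).fderiv]
      module
    -- decay bounds at translated points
    have hdec : ∀ x ∈ closedBall (0 : EuclideanSpace ℝ (Fin N)) (2*ρ),
        |w (x - R • θ)| ≤ m ∧ ‖fderiv ℝ w (x - R • θ)‖ ≤ m := by
      intro x hx
      have hxnorm : ‖x‖ ≤ 2*ρ := by simpa [mem_closedBall, dist_zero_right] using hx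
      have hz : R - 2*ρ ≤ ‖x - R • θ‖ := by
        have h1 : ‖R • θ‖ - ‖x‖ ≤ ‖R • θ - x‖ := norm_sub_norm_le _ _
        have h2 : ‖R • θ‖ = R * ‖θ‖ := by rw [norm_smul, Real.norm_of_nonneg hRpos.le]
        have h3 : R ≤ R * ‖θ‖ := le_mul_of_one_le_right hRpos.le hθ
        rw [norm_sub_rev]
        linarith
      have hz0 : ρ₀ ≤ ‖x - R • θ‖ := le_trans hρ₀R hz
      obtain ⟨hb1, hb2⟩ := hwdecay _ hz0
      have hmono : σ * ‖x - R • θ‖ ^ (-e) * Real.exp (-(s * ‖x - R • θ‖)) ≤ m := by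
        rw [hm_def]
        apply mul_le_mul _ _ (Real.exp_nonneg _) (by positivity)
        · exact mul_le_mul_of_nonneg_left (Real.rpow_le_rpow_of_nonpos hab hz (by linarith)) hσ.le
        · exact Real.exp_le_exp.mpr (by nlinarith)
      have hgradnorm : ‖gradient w (x - R • θ)‖ = ‖fderiv ℝ w (x - R • θ)‖ := by
        rw [gradient]; exact LinearIsometryEquiv.norm_map _ _
      exact ⟨hb1.trans hmono, by rw [← hgradnorm]; exact hb2.trans hmono⟩
    -- bound on the integral
    set B : ℝ := ((M+1)^2 + lam) * m^2 with hB_def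
    have key : (∫ x, (‖gradient (fun x' => ξ x' * w (x' - R • θ)) x - gradient w (x - R • θ)‖ ^ 2 +
            lam * (ξ x * w (x - R • θ) - w (x - R • θ)) ^ 2)) ≤ B * V := by
      set f : EuclideanSpace ℝ (Fin N) → ℝ := fun x =>
        ‖gradient (fun x' => ξ x' * w (x' - R • θ)) x - gradient w (x - R • θ)‖ ^ 2 +
          lam * (ξ x * w (x - R • θ) - w (x - R • θ)) ^ 2 with hf_def
      have hsupp : ∀ x, x ∉ closedBall (0 : EuclideanSpace ℝ (Fin N)) (2*ρ) → f x = 0 := by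
        intro x hx
        have hxn : 2*ρ < ‖x‖ := by simpa [mem_closedBall, dist_zero_right, not_le] using hx
        have hξx : ξ x = 1 := hξ1 x (by simp only [mem_ball, dist_zero_right, not_lt]; linarith)
        have hgr : gradient (fun x' => ξ x' * w (x' - R • θ)) x = gradient w (x - R • θ) := by
          have hopen : IsOpen {y : EuclideanSpace ℝ (Fin N) | 2*ρ < ‖y‖} :=
            isOpen_lt continuous_const continuous_norm
          have hev : (fun x' => ξ x' * w (x' - R • θ)) =ᶠ[nhds x] (fun x' => w (x' - R • θ)) := by
            filter_upwards [hopen.mem_nhds hxn] with y hy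
            rw [hξ1 y (by simp only [mem_ball, dist_zero_right, not_lt]; exact le_of_lt hy), one_mul]
          rw [gradient, gradient, hev.fderiv_eq, (hwRd x).fderiv]
        simp [hf_def, hgr, hξx]
      have hpt : ∀ x ∈ closedBall (0 : EuclideanSpace ℝ (Fin N)) (2*ρ), ‖f x‖ ≤ B := by
        intro x hx
        obtain ⟨hw1, hw2⟩ := hdec x hx
        have hξabs : |ξ x - 1| ≤ 1 := by
          obtain ⟨h0, h1⟩ := hξ01 x
          rw [abs_le]; constructor <;> linarith
        have hgnorm : ‖gradient (fun x' => ξ x' * w (x' - R • θ)) x - gradient w (x - R • θ)‖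
            ≤ (M+1) * m := by
          rw [hgd x, LinearIsometryEquiv.norm_map]
          calc ‖(ξ x - 1) • fderiv ℝ w (x - R • θ) + w (x - R • θ) • fderiv ℝ ξ x‖
              ≤ ‖(ξ x - 1) • fderiv ℝ w (x - R • θ)‖ + ‖w (x - R • θ) • fderiv ℝ ξ x‖ :=
                norm_add_le _ _
            _ = |ξ x - 1| * ‖fderiv ℝ w (x - R • θ)‖ + |w (x - R • θ)| * ‖fderiv ℝ ξ x‖ := by
                rw [norm_smul, norm_smul, Real.norm_eq_abs, Real.norm_eq_abs]
            _ ≤ 1 * m + m * M := add_le_add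
                (mul_le_mul hξabs hw2 (norm_nonneg _) zero_le_one)
                (mul_le_mul hw1 (hM x hx) (norm_nonneg _) hm0)
            _ = (M+1) * m := by ring
        have hfnn : 0 ≤ f x := by rw [hf_def]; positivity
        rw [Real.norm_of_nonneg hfnn, hf_def]
        have h1 : ‖gradient (fun x' => ξ x' * w (x' - R • θ)) x - gradient w (x - R • θ)‖ ^ 2
            ≤ ((M+1) * m) ^ 2 := pow_le_pow_left₀ (norm_nonneg _) hgnorm 2
        have h2 : (ξ x * w (x - R • θ) - w (x - R • θ)) ^ 2 ≤ m ^ 2 := by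
          have heq : ξ x * w (x - R • θ) - w (x - R • θ) = (ξ x - 1) * w (x - R • θ) := by ring
          rw [heq]
          have h3 : (ξ x - 1) ^ 2 ≤ 1 := by nlinarith [abs_le.1 hξabs]
          have h4 : (w (x - R • θ)) ^ 2 ≤ m ^ 2 := by
            rw [← sq_abs]; exact pow_le_pow_left₀ (abs_nonneg _) hw1 2
          nlinarith [sq_nonneg (w (x - R • θ)), sq_nonneg (ξ x - 1)]
        calc ‖gradient (fun x' => ξ x' * w (x' - R • θ)) x - gradient w (x - R • θ)‖ ^ 2 +
              lam * (ξ x * w (x - R • θ) - w (x - R • θ)) ^ 2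
            ≤ ((M+1) * m) ^ 2 + lam * m ^ 2 := by
              have := mul_le_mul_of_nonneg_left h2 hlam.le
              linarith
          _ = B := by rw [hB_def]; ring
      have heq : ∫ x, f x = ∫ x in closedBall (0 : EuclideanSpace ℝ (Fin N)) (2*ρ), f x := by
        rw [← MeasureTheory.integral_indicator measurableSet_closedBall,
          Set.indicator_eq_self.2 (Function.support_subset_iff'.2 hsupp)]
      rw [heq]
      calc ∫ x in closedBall (0 : EuclideanSpace ℝ (Fin N)) (2*ρ), f x
          ≤ ‖∫ x in closedBall (0 : EuclideanSpace ℝ (Fin N)) (2*ρ), f x‖ := le_abs_self _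
        _ ≤ B * V := MeasureTheory.norm_setIntegral_le_of_norm_le_const measure_closedBall_lt_top
            hpt
    -- final computation
    have hA0 : (0:ℝ) ≤ R ^ e * Real.exp (2*R*s) := by positivity
    have hexp : Real.exp (2*R*s) * (Real.exp (-(s*(R-2*ρ))))^2 = Real.exp (4*ρ*s) := by
      rw [sq, ← Real.exp_add, ← Real.exp_add]
      congr 1; ring
    have hq : (R-2*ρ) ^ (-e) ≤ (R/2) ^ (-e) :=
      Real.rpow_le_rpow_of_nonpos (by positivity) hhalf (by linarith)
    have hq2 : ((R-2*ρ) ^ (-e))^2 ≤ ((R/2) ^ (-e))^2 :=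
      pow_le_pow_left₀ (Real.rpow_nonneg hab.le _) hq 2
    have hRe : R ^ e * R ^ (-e) = 1 := by
      rw [← Real.rpow_add hRpos]; simp
    have h2e : (2:ℝ)^e * 2^e = 4^e := by
      rw [← Real.mul_rpow (by norm_num) (by norm_num)]; norm_num
    have h4 : R ^ e * ((R/2) ^ (-e))^2 = 4 ^ e * R ^ (-e) := by
      rw [Real.div_rpow hRpos.le (by norm_num : (0:ℝ) ≤ 2),
        Real.rpow_neg (by norm_num : (0:ℝ) ≤ 2)]
      rw [div_inv_eq_mul]
      linear_combination (R ^ (-e) * (2^e)^2) * hRe + R ^ (-e) * h2e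
    have hpow : R ^ e * ((R-2*ρ) ^ (-e))^2 ≤ 4 ^ e * R ^ (-e) := by
      rw [← h4]
      exact mul_le_mul_of_nonneg_left hq2 (Real.rpow_nonneg hRpos.le _)
    calc R ^ e * Real.exp (2*R*s) *
          ∫ x, (‖gradient (fun x' => ξ x' * w (x' - R • θ)) x - gradient w (x - R • θ)‖ ^ 2 +
            lam * (ξ x * w (x - R • θ) - w (x - R • θ)) ^ 2)
        ≤ R ^ e * Real.exp (2*R*s) * (B * V) := mul_le_mul_of_nonneg_left key hA0
      _ = (C0 * V) * (R ^ e * ((R-2*ρ) ^ (-e))^2) *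
            (Real.exp (2*R*s) * (Real.exp (-(s*(R-2*ρ))))^2) := by
          rw [hB_def, hm_def, hC0_def]; ring
      _ = (C0 * V) * (R ^ e * ((R-2*ρ) ^ (-e))^2) * Real.exp (4*ρ*s) := by rw [hexp]
      _ ≤ (C0 * V) * (4 ^ e * R ^ (-e)) * Real.exp (4*ρ*s) := by
          apply mul_le_mul_of_nonneg_right _ (Real.exp_nonneg _)
          exact mul_le_mul_of_nonneg_left hpow (by positivity)
      _ = C1 * R ^ (-e) := by rw [hC1_def]; ring
  · have := (tendsto_rpow_neg_atTop he).const_mul C1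
    simpa using this
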